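/- Let (A,∘) be an alternative algebra over a field of characteristic 0 that is graded by the positive integers: A = ⊕_{i≥1} A_i with A_i∘A_j ⊆ A_{i+j}. Define bilinear products on A by x_i ≻ x_j = (j/(i+j)) x_i∘x_j and x_i ≺ x_j = (i/(i+j)) x_i∘x_j for x_i ∈ A_i, x_j ∈ A_j, extended bilinearly. Then (A,≺,≻) is a pre-alternative algebra and x≺y + x≻y = x∘y for all x,y ∈ A. -/

import Mathlib

open TensorProduct

universe u v w

variable {k : Type u} [Field k]

section Defs

variable {M : Type v} {V : Type w} [AddCommGroup M] [Module k M] [AddCommGroup V] [Module k V]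

/-- Alternative algebra: both alternative laws. -/
def IsAlt (m : M →ₗ[k] M →ₗ[k] M) : Prop :=
  (∀ x y : M, m (m x x) y = m x (m x y)) ∧ (∀ x y : M, m (m y x) x = m y (m x x))

/-- right associator -/
def rAssoc (p s : M →ₗ[k] M →ₗ[k] M) (x y z : M) : M :=
  p (p x y) z - p x (p y z + s y z)

/-- middle associator -/
def mAssoc (p s : M →ₗ[k] M →ₗ[k] M) (x y z : M) : M :=
  p (s x y) z - s x (p y z)

/-- left associator -/
def lAssoc (p s : M →ₗ[k] M →ₗ[k] M) (x y z : M) : M :=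
  s (p x y + s x y) z - s x (s y z)

/-- Pre-alternative algebra. -/
def IsPreAlt (p s : M →ₗ[k] M →ₗ[k] M) : Prop :=
  (∀ x y z : M, mAssoc p s x y z + rAssoc p s y x z = 0) ∧
  (∀ x y z : M, mAssoc p s x y z + lAssoc p s x z y = 0) ∧
  (∀ x y : M, rAssoc p s y x x = 0) ∧
  (∀ x y : M, lAssoc p s x x y = 0)

/-- Bimodule of an alternative algebra. -/
def IsAltBimod (m : M →ₗ[k] M →ₗ[k] M) (L R : M →ₗ[k] Module.End k V) : Prop :=
  (∀ x : M, L (m x x) = L x * L x) ∧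
  (∀ x : M, R (m x x) = R x * R x) ∧
  (∀ x y : M, R y * L x - L x * R y = R (m x y) - R y * R x) ∧
  (∀ x y : M, L (m y x) - L y * L x = L y * R x - R x * L y)

/-- Bimodule of a pre-alternative algebra. -/
def IsPreAltBimod (p s : M →ₗ[k] M →ₗ[k] M) (Lp Rp Ls Rs : M →ₗ[k] Module.End k V) : Prop :=
  (∀ x y : M, Ls ((p x y + s x y) + (p y x + s y x)) = Ls x * Ls y + Ls y * Ls x) ∧
  (∀ x y : M, Rs y * ((Lp x + Ls x) + (Rp x + Rs x)) = Ls x * Rs y + Rs (s x y)) ∧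
  (∀ x y : M, Rp y * Ls x + Rp y * Rp x = Ls x * Rp y + Rp (p x y + s x y)) ∧
  (∀ x y : M, Rp y * Rs x + Rp y * Lp x = Rs (p x y) + Lp x * (Rp y + Rs y)) ∧
  (∀ x y : M, Lp (s x y) + Lp (p y x) = Ls x * Lp y + Lp y * (Lp x + Ls x)) ∧
  (∀ x y : M, Ls (p y x + s y x) + Rp x * Ls y = Ls y * Ls x + Ls y * Rp x) ∧
  (∀ x y : M, Rs y * (Rp x + Rs x) + Rp x * Rs y = Rs (s x y) + Rs (p y x)) ∧
  (∀ x y : M, Rs x * (Lp y + Ls y) + Lp (s y x) = Ls y * Rs x + Ls y * Lp x) ∧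
  (∀ x y : M, Rp y * Rp x + Rp x * Rp y = Rp ((p x y + s x y) + (p y x + s y x))) ∧
  (∀ x y : M, Rp y * Lp x + Lp (p x y) = Lp x * ((Rp y + Rs y) + (Lp y + Ls y)))

/-- Dual family of endomorphisms: `(dualT L) x = (L x)^*`. -/
noncomputable def dualT (L : M →ₗ[k] Module.End k V) :
    M →ₗ[k] Module.End k (Module.Dual k V) :=
  (Module.Dual.transpose (R := k) (M := V) (M' := V)) ∘ₗ L

/-- The linear map `A* → A` associated to an element of `A ⊗ A`:
`⟨u* ⊗ v*, r⟩ = ⟨u*, T_r v*⟩`, i.e. `T_r(v*) = Σ v*(bᵢ) • aᵢ`. -/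
noncomputable def Tr : (M ⊗[k] M) →ₗ[k] Module.Dual k M →ₗ[k] M :=
  TensorProduct.lift (LinearMap.mk₂ k
    (fun a b => (Module.Dual.eval k M b).smulRight a)
    (fun a a' b => by ext f; simp)
    (fun c a b => by ext f; simp only [LinearMap.smulRight_apply, LinearMap.smul_apply,
      Module.Dual.eval_apply]; exact smul_comm _ _ _)
    (fun a b b' => by ext f; simp [add_smul])
    (fun c a b => by ext f; simp [map_smul, mul_smul]))

noncomputable def tlift (m : M →ₗ[k] M →ₗ[k] M) : M ⊗[k] M →ₗ[k] M := TensorProduct.lift m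

/-- `r₁₂ ⋄ r₁₃` : `(a⊗b)⊗(c⊗d) ↦ (a⋄c)⊗b⊗d`. -/
noncomputable def comp12_13 (m : M →ₗ[k] M →ₗ[k] M) :
    (M ⊗[k] M) ⊗[k] (M ⊗[k] M) →ₗ[k] M ⊗[k] (M ⊗[k] M) :=
  (TensorProduct.map (tlift m) LinearMap.id) ∘ₗ
    (TensorProduct.tensorTensorTensorComm k M M M M).toLinearMap

/-- `r₁₃ ⋄ r₁₂` : `(a⊗b)⊗(c⊗d) ↦ (a⋄c)⊗d⊗b`. -/
noncomputable def comp13_12 (m : M →ₗ[k] M →ₗ[k] M) :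
    (M ⊗[k] M) ⊗[k] (M ⊗[k] M) →ₗ[k] M ⊗[k] (M ⊗[k] M) :=
  (TensorProduct.map (tlift m) (TensorProduct.comm k M M).toLinearMap) ∘ₗ
    (TensorProduct.tensorTensorTensorComm k M M M M).toLinearMap

/-- `r₁₂ ⋄ r₂₃` : `(a⊗b)⊗(c⊗d) ↦ a⊗(b⋄c)⊗d`. -/
noncomputable def comp12_23 (m : M →ₗ[k] M →ₗ[k] M) :
    (M ⊗[k] M) ⊗[k] (M ⊗[k] M) →ₗ[k] M ⊗[k] (M ⊗[k] M) :=
  (TensorProduct.map LinearMap.id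
      ((TensorProduct.map (tlift m) LinearMap.id) ∘ₗ
        (TensorProduct.assoc k M M M).symm.toLinearMap)) ∘ₗ
    (TensorProduct.assoc k M M (M ⊗[k] M)).toLinearMap

/-- `r₂₃ ⋄ r₁₂` : `(a⊗b)⊗(c⊗d) ↦ c⊗(a⋄d)⊗b`. -/
noncomputable def comp23_12 (m : M →ₗ[k] M →ₗ[k] M) :
    (M ⊗[k] M) ⊗[k] (M ⊗[k] M) →ₗ[k] M ⊗[k] (M ⊗[k] M) :=
  (TensorProduct.map LinearMap.id
      ((TensorProduct.map (tlift m.flip) LinearMap.id) ∘ₗ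
        (TensorProduct.assoc k M M M).symm.toLinearMap)) ∘ₗ
    (TensorProduct.assoc k M M (M ⊗[k] M)).toLinearMap ∘ₗ
    (TensorProduct.comm k (M ⊗[k] M) (M ⊗[k] M)).toLinearMap

/-- `r₁₃ ⋄ r₂₃` : `(a⊗b)⊗(c⊗d) ↦ a⊗c⊗(b⋄d)`. -/
noncomputable def comp13_23 (m : M →ₗ[k] M →ₗ[k] M) :
    (M ⊗[k] M) ⊗[k] (M ⊗[k] M) →ₗ[k] M ⊗[k] (M ⊗[k] M) :=
  (TensorProduct.map LinearMap.id (TensorProduct.map LinearMap.id (tlift m))) ∘ₗ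
    (TensorProduct.assoc k M M (M ⊗[k] M)).toLinearMap ∘ₗ
    (TensorProduct.tensorTensorTensorComm k M M M M).toLinearMap

/-- `r₂₃ ⋄ r₁₃` : `(a⊗b)⊗(c⊗d) ↦ c⊗a⊗(b⋄d)`. -/
noncomputable def comp23_13 (m : M →ₗ[k] M →ₗ[k] M) :
    (M ⊗[k] M) ⊗[k] (M ⊗[k] M) →ₗ[k] M ⊗[k] (M ⊗[k] M) :=
  (TensorProduct.map LinearMap.id (TensorProduct.map LinearMap.id (tlift m))) ∘ₗ
    (TensorProduct.assoc k M M (M ⊗[k] M)).toLinearMap ∘ₗ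
    (TensorProduct.map (TensorProduct.comm k M M).toLinearMap LinearMap.id) ∘ₗ
    (TensorProduct.tensorTensorTensorComm k M M M M).toLinearMap

/-- The alternative Yang–Baxter expression `r₂₃∘r₁₂ − r₁₂∘r₁₃ − r₁₃∘r₂₃`. -/
noncomputable def ayb (m : M →ₗ[k] M →ₗ[k] M) (r : M ⊗[k] M) : M ⊗[k] (M ⊗[k] M) :=
  comp23_12 m (r ⊗ₜ r) - comp12_13 m (r ⊗ₜ r) - comp13_23 m (r ⊗ₜ r)

/-- PA-equations. -/
noncomputable def PA11 (p s : M →ₗ[k] M →ₗ[k] M) (r : M ⊗[k] M) : M ⊗[k] (M ⊗[k] M) :=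
  comp12_13 (p + s) (r ⊗ₜ r) - comp23_12 s (r ⊗ₜ r) - comp13_23 p (r ⊗ₜ r)

noncomputable def PA12 (p s : M →ₗ[k] M →ₗ[k] M) (r : M ⊗[k] M) : M ⊗[k] (M ⊗[k] M) :=
  comp13_12 (p + s) (r ⊗ₜ r) - comp12_23 p (r ⊗ₜ r) - comp23_13 s (r ⊗ₜ r)

noncomputable def PA21 (p s : M →ₗ[k] M →ₗ[k] M) (r : M ⊗[k] M) : M ⊗[k] (M ⊗[k] M) :=
  comp12_23 (p + s) (r ⊗ₜ r) - comp23_13 p (r ⊗ₜ r) - comp13_12 s (r ⊗ₜ r)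

noncomputable def PA22 (p s : M →ₗ[k] M →ₗ[k] M) (r : M ⊗[k] M) : M ⊗[k] (M ⊗[k] M) :=
  comp23_12 (p + s) (r ⊗ₜ r) - comp13_23 s (r ⊗ₜ r) - comp12_13 p (r ⊗ₜ r)

noncomputable def PA31 (p s : M →ₗ[k] M →ₗ[k] M) (r : M ⊗[k] M) : M ⊗[k] (M ⊗[k] M) :=
  comp13_23 (p + s) (r ⊗ₜ r) - comp12_13 s (r ⊗ₜ r) - comp23_12 p (r ⊗ₜ r)

noncomputable def PA32 (p s : M →ₗ[k] M →ₗ[k] M) (r : M ⊗[k] M) : M ⊗[k] (M ⊗[k] M) :=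
  comp23_13 (p + s) (r ⊗ₜ r) - comp13_12 p (r ⊗ₜ r) - comp12_23 s (r ⊗ₜ r)

/-- Semidirect sum product on `M × V` for an alternative algebra `M` and a bimodule `(V,L,R)`. -/
def sd (m : M →ₗ[k] M →ₗ[k] M) (L R : M →ₗ[k] Module.End k V) :
    (M × V) →ₗ[k] (M × V) →ₗ[k] (M × V) :=
  LinearMap.mk₂ k (fun x y => (m x.1 y.1, L x.1 y.2 + R y.1 x.2))
    (fun x x' y => by refine Prod.ext ?_ ?_ <;> simp [map_add] <;> abel)
    (fun c x y => by refine Prod.ext ?_ ?_ <;> simp [map_smul, smul_add])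
    (fun x y y' => by refine Prod.ext ?_ ?_ <;> simp [map_add] <;> abel)
    (fun c x y => by refine Prod.ext ?_ ?_ <;> simp [map_smul, smul_add])

end Defs

section Aux

variable {A : Type v} [AddCommGroup A] [Module k A]

lemma bil_red (𝒜 : ℕ → Submodule k A) (hsup : (⨆ i, 𝒜 i) = ⊤) (E : A → A → A)
    (hax : ∀ x x' y, E (x + x') y = E x y + E x' y)
    (h0x : ∀ y, E 0 y = 0)
    (hay : ∀ x y y', E x (y + y') = E x y + E x y')
    (h0y : ∀ x, E x 0 = 0)
    (hhom : ∀ i j, ∀ x ∈ 𝒜 i, ∀ y ∈ 𝒜 j, E x y = 0) :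
    ∀ x y, E x y = 0 := by
  have mem : ∀ a : A, a ∈ ⨆ i, 𝒜 i := fun a => by rw [hsup]; trivial
  intro x y
  refine Submodule.iSup_induction 𝒜 (motive := fun a => E a y = 0) (mem x) ?_ (h0x y)
    (fun a b ha hb => by show E (a + b) _ = 0; rw [hax, show E a _ = (0:A) from ha, show E b _ = (0:A) from hb, add_zero])
  intro i a hai
  refine Submodule.iSup_induction 𝒜 (motive := fun b => E a b = 0) (mem y) ?_ (h0y a)
    (fun c d hc hd => by show E _ (c + d) = 0; rw [hay, show E _ c = (0:A) from hc, show E _ d = (0:A) from hd, add_zero])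
  intro j b hbj
  exact hhom i j a hai b hbj

lemma tri_red (𝒜 : ℕ → Submodule k A) (hsup : (⨆ i, 𝒜 i) = ⊤) (E : A → A → A → A)
    (hax : ∀ x x' y z, E (x + x') y z = E x y z + E x' y z)
    (h0x : ∀ y z, E 0 y z = 0)
    (hay : ∀ x y y' z, E x (y + y') z = E x y z + E x y' z)
    (h0y : ∀ x z, E x 0 z = 0)
    (haz : ∀ x y z z', E x y (z + z') = E x y z + E x y z')
    (h0z : ∀ x y, E x y 0 = 0)
    (hhom : ∀ i j l, ∀ x ∈ 𝒜 i, ∀ y ∈ 𝒜 j, ∀ z ∈ 𝒜 l, E x y z = 0) :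
    ∀ x y z, E x y z = 0 := by
  have mem : ∀ a : A, a ∈ ⨆ i, 𝒜 i := fun a => by rw [hsup]; trivial
  intro x y z
  refine Submodule.iSup_induction 𝒜 (motive := fun a => E a y z = 0) (mem x) ?_ (h0x y z)
    (fun a b ha hb => by show E (a + b) _ _ = 0; rw [hax, show E a _ _ = (0:A) from ha, show E b _ _ = (0:A) from hb, add_zero])
  intro i a hai
  refine Submodule.iSup_induction 𝒜 (motive := fun b => E a b z = 0) (mem y) ?_ (h0y a z)
    (fun c d hc hd => by show E _ (c + d) _ = 0; rw [hay, show E _ c _ = (0:A) from hc, show E _ d _ = (0:A) from hd, add_zero])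
  intro j b hbj
  refine Submodule.iSup_induction 𝒜 (motive := fun cc => E a b cc = 0) (mem z) ?_ (h0z a b)
    (fun c d hc hd => by show E _ _ (c + d) = 0; rw [haz, show E _ _ c = (0:A) from hc, show E _ _ d = (0:A) from hd, add_zero])
  intro l c hcl
  exact hhom i j l a hai b hbj c hcl

end Aux

theorem stmt5 {A : Type v} [AddCommGroup A] [Module k A] [CharZero k]
    (𝒜 : ℕ → Submodule k A) (hinternal : DirectSum.IsInternal 𝒜) (h0 : 𝒜 0 = ⊥)
    (m : A →ₗ[k] A →ₗ[k] A) (halt : IsAlt m)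
    (hgr : ∀ i j : ℕ, ∀ x ∈ 𝒜 i, ∀ y ∈ 𝒜 j, m x y ∈ 𝒜 (i + j))
    (p s : A →ₗ[k] A →ₗ[k] A)
    (hp : ∀ i j : ℕ, ∀ x ∈ 𝒜 i, ∀ y ∈ 𝒜 j,
      p x y = ((i : k) / ((i : k) + (j : k))) • m x y)
    (hs : ∀ i j : ℕ, ∀ x ∈ 𝒜 i, ∀ y ∈ 𝒜 j,
      s x y = ((j : k) / ((i : k) + (j : k))) • m x y) :
    IsPreAlt p s ∧ ∀ x y, p x y + s x y = m x y := by
  obtain ⟨hl, hr⟩ := halt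
  have hsup : (⨆ i, 𝒜 i) = ⊤ := hinternal.submodule_iSup_eq_top
  have hzero : ∀ x ∈ 𝒜 0, x = (0 : A) := fun x hx => by
    rw [h0] at hx; simpa using hx
  have skew12 : ∀ u v w : A,
      (m (m u v) w - m u (m v w)) + (m (m v u) w - m v (m u w)) = 0 := by
    intro u v w
    have e := hl (u + v) w
    have e1 := hl u w
    have e2 := hl v w
    simp only [map_add, LinearMap.add_apply] at e
    linear_combination (norm := module) e - e1 - e2
  have skew23 : ∀ u v w : A,
      (m (m u v) w - m u (m v w)) + (m (m u w) v - m u (m w v)) = 0 := by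
    intro u v w
    have e := hr (v + w) u
    have e1 := hr v u
    have e2 := hr w u
    simp only [map_add, LinearMap.add_apply] at e
    linear_combination (norm := module) e - e1 - e2
  have hcast : ∀ n : ℕ, 0 < n → ((n : k)) ≠ 0 := fun n hn => Nat.cast_ne_zero.mpr hn.ne'
  have hm0 : ∀ i j, ∀ x ∈ 𝒜 i, ∀ y ∈ 𝒜 j, p x y + s x y = m x y := by
    intro i j x hx y hy
    rcases Nat.eq_zero_or_pos i with hi | hi
    · rw [hzero x (hi ▸ hx)]; simp
    rcases Nat.eq_zero_or_pos j with hj | hj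
    · rw [hzero y (hj ▸ hy)]; simp
    have hij : ((i : k) + (j : k)) ≠ 0 := by
      have := hcast (i + j) (by omega); push_cast at this; exact this
    rw [hp i j x hx y hy, hs i j x hx y hy, ← add_smul, ← add_div, div_self hij,
      one_smul]
  have hpsm : ∀ x y, p x y + s x y = m x y := by
    have := bil_red 𝒜 hsup (fun x y => p x y + s x y - m x y)
      (by intro x x' y; simp only [map_add, LinearMap.add_apply]; abel)
      (by intro y; simp)
      (by intro x y y'; simp only [map_add]; abel)
      (by intro x; simp)
      (by intro i j x hx y hy; simp only [hm0 i j x hx y hy, sub_self])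
    intro x y
    exact sub_eq_zero.mp (this x y)
  -- six product formulas on homogeneous elements
  have hdiv : ∀ x y z : k, y ≠ 0 → x / y * (y / z) = x / z := fun x y z hy => by
    rw [div_mul_div_comm, mul_comm x y, mul_div_mul_left x z hy]
  have Hps : ∀ a b c : ℕ, 0 < a → 0 < b → 0 < c → ∀ u ∈ 𝒜 a, ∀ v ∈ 𝒜 b, ∀ w ∈ 𝒜 c,
      p (s u v) w = ((b : k) / ((a : k) + (b : k) + (c : k))) • m (m u v) w := by
    intro a b c ha hb hc u hu v hv w hw
    have hab : ((a : k) + (b : k)) ≠ 0 := by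
      have := hcast (a + b) (by omega); push_cast at this; exact this
    have habc : ((a : k) + (b : k) + (c : k)) ≠ 0 := by
      have := hcast (a + b + c) (by omega); push_cast at this; exact this
    rw [hs a b u hu v hv, map_smul, LinearMap.smul_apply,
      hp (a + b) c (m u v) (hgr a b u hu v hv) w hw, smul_smul]
    congr 1
    push_cast
    field_simp
  have Hsp : ∀ a b c : ℕ, 0 < a → 0 < b → 0 < c → ∀ u ∈ 𝒜 a, ∀ v ∈ 𝒜 b, ∀ w ∈ 𝒜 c,
      s u (p v w) = ((b : k) / ((a : k) + (b : k) + (c : k))) • m u (m v w) := by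
    intro a b c ha hb hc u hu v hv w hw
    have hbc : ((b : k) + (c : k)) ≠ 0 := by
      have := hcast (b + c) (by omega); push_cast at this; exact this
    have habc : ((a : k) + (b : k) + (c : k)) ≠ 0 := by
      have := hcast (a + b + c) (by omega); push_cast at this; exact this
    rw [hp b c v hv w hw, map_smul,
      hs a (b + c) u hu (m v w) (hgr b c v hv w hw), smul_smul]
    congr 1
    push_cast
    rw [hdiv _ _ _ hbc, ← add_assoc]
  have Hpp : ∀ a b c : ℕ, 0 < a → 0 < b → 0 < c → ∀ u ∈ 𝒜 a, ∀ v ∈ 𝒜 b, ∀ w ∈ 𝒜 c,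
      p (p u v) w = ((a : k) / ((a : k) + (b : k) + (c : k))) • m (m u v) w := by
    intro a b c ha hb hc u hu v hv w hw
    have hab : ((a : k) + (b : k)) ≠ 0 := by
      have := hcast (a + b) (by omega); push_cast at this; exact this
    have habc : ((a : k) + (b : k) + (c : k)) ≠ 0 := by
      have := hcast (a + b + c) (by omega); push_cast at this; exact this
    rw [hp a b u hu v hv, map_smul, LinearMap.smul_apply,
      hp (a + b) c (m u v) (hgr a b u hu v hv) w hw, smul_smul]
    congr 1
    push_cast
    field_simp
  have Hpm : ∀ a b c : ℕ, 0 < a → 0 < b → 0 < c → ∀ u ∈ 𝒜 a, ∀ v ∈ 𝒜 b, ∀ w ∈ 𝒜 c,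
      p u (m v w) = ((a : k) / ((a : k) + (b : k) + (c : k))) • m u (m v w) := by
    intro a b c ha hb hc u hu v hv w hw
    rw [hp a (b + c) u hu (m v w) (hgr b c v hv w hw)]
    congr 1
    push_cast
    ring
  have Hsm : ∀ a b c : ℕ, 0 < a → 0 < b → 0 < c → ∀ u ∈ 𝒜 a, ∀ v ∈ 𝒜 b, ∀ w ∈ 𝒜 c,
      s (m u v) w = ((c : k) / ((a : k) + (b : k) + (c : k))) • m (m u v) w := by
    intro a b c ha hb hc u hu v hv w hw
    rw [hs (a + b) c (m u v) (hgr a b u hu v hv) w hw]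
    congr 1
    push_cast
    ring
  have Hss : ∀ a b c : ℕ, 0 < a → 0 < b → 0 < c → ∀ u ∈ 𝒜 a, ∀ v ∈ 𝒜 b, ∀ w ∈ 𝒜 c,
      s u (s v w) = ((c : k) / ((a : k) + (b : k) + (c : k))) • m u (m v w) := by
    intro a b c ha hb hc u hu v hv w hw
    have hbc : ((b : k) + (c : k)) ≠ 0 := by
      have := hcast (b + c) (by omega); push_cast at this; exact this
    have habc : ((a : k) + (b : k) + (c : k)) ≠ 0 := by
      have := hcast (a + b + c) (by omega); push_cast at this; exact this
    rw [hs b c v hv w hw, map_smul,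
      hs a (b + c) u hu (m v w) (hgr b c v hv w hw), smul_smul]
    congr 1
    push_cast
    rw [hdiv _ _ _ hbc, ← add_assoc]
  have I1 : ∀ x y z : A, mAssoc p s x y z + rAssoc p s y x z = 0 := by
    refine tri_red 𝒜 hsup (fun x y z => mAssoc p s x y z + rAssoc p s y x z) ?_ ?_ ?_ ?_ ?_ ?_ ?_
    · intro x x' y z; simp only [mAssoc, rAssoc, map_add, LinearMap.add_apply]; abel
    · intro y z; simp [mAssoc, rAssoc]
    · intro x y y' z; simp only [mAssoc, rAssoc, map_add, LinearMap.add_apply]; abel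
    · intro x z; simp [mAssoc, rAssoc]
    · intro x y z z'; simp only [mAssoc, rAssoc, map_add, LinearMap.add_apply]; abel
    · intro x y; simp [mAssoc, rAssoc]
    · intro i j l x hx y hy z hz
      rcases Nat.eq_zero_or_pos i with hi | hi
      · rw [hzero x (hi ▸ hx)]; simp [mAssoc, rAssoc]
      rcases Nat.eq_zero_or_pos j with hj | hj
      · rw [hzero y (hj ▸ hy)]; simp [mAssoc, rAssoc]
      rcases Nat.eq_zero_or_pos l with hll | hll
      · rw [hzero z (hll ▸ hz)]; simp [mAssoc, rAssoc]
      simp only [mAssoc, rAssoc]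
      rw [hpsm x z, Hps i j l hi hj hll x hx y hy z hz, Hsp i j l hi hj hll x hx y hy z hz,
        Hpp j i l hj hi hll y hy x hx z hz, Hpm j i l hj hi hll y hy x hx z hz]
      linear_combination (norm := module)
        (((j : k)) / ((i : k) + (j : k) + (l : k))) • skew12 x y z
  have I2 : ∀ x y z : A, mAssoc p s x y z + lAssoc p s x z y = 0 := by
    refine tri_red 𝒜 hsup (fun x y z => mAssoc p s x y z + lAssoc p s x z y) ?_ ?_ ?_ ?_ ?_ ?_ ?_
    · intro x x' y z; simp only [mAssoc, lAssoc, map_add, LinearMap.add_apply]; abel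
    · intro y z; simp [mAssoc, lAssoc]
    · intro x y y' z; simp only [mAssoc, lAssoc, map_add, LinearMap.add_apply]; abel
    · intro x z; simp [mAssoc, lAssoc]
    · intro x y z z'; simp only [mAssoc, lAssoc, map_add, LinearMap.add_apply]; abel
    · intro x y; simp [mAssoc, lAssoc]
    · intro i j l x hx y hy z hz
      rcases Nat.eq_zero_or_pos i with hi | hi
      · rw [hzero x (hi ▸ hx)]; simp [mAssoc, lAssoc]
      rcases Nat.eq_zero_or_pos j with hj | hj
      · rw [hzero y (hj ▸ hy)]; simp [mAssoc, lAssoc]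
      rcases Nat.eq_zero_or_pos l with hll | hll
      · rw [hzero z (hll ▸ hz)]; simp [mAssoc, lAssoc]
      simp only [mAssoc, lAssoc]
      rw [hpsm x z, Hps i j l hi hj hll x hx y hy z hz, Hsp i j l hi hj hll x hx y hy z hz,
        Hsm i l j hi hll hj x hx z hz y hy, Hss i l j hi hll hj x hx z hz y hy]
      linear_combination (norm := module)
        (((j : k)) / ((i : k) + (j : k) + (l : k))) • skew23 x y z
  have I3pol : ∀ x y z : A, rAssoc p s y x z + rAssoc p s y z x = 0 := by
    refine tri_red 𝒜 hsup (fun x y z => rAssoc p s y x z + rAssoc p s y z x) ?_ ?_ ?_ ?_ ?_ ?_ ?_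
    · intro x x' y z; simp only [rAssoc, map_add, LinearMap.add_apply]; abel
    · intro y z; simp [rAssoc]
    · intro x y y' z; simp only [rAssoc, map_add, LinearMap.add_apply]; abel
    · intro x z; simp [rAssoc]
    · intro x y z z'; simp only [rAssoc, map_add, LinearMap.add_apply]; abel
    · intro x y; simp [rAssoc]
    · intro i j l x hx y hy z hz
      rcases Nat.eq_zero_or_pos i with hi | hi
      · rw [hzero x (hi ▸ hx)]; simp [rAssoc]
      rcases Nat.eq_zero_or_pos j with hj | hj
      · rw [hzero y (hj ▸ hy)]; simp [rAssoc]
      rcases Nat.eq_zero_or_pos l with hll | hll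
      · rw [hzero z (hll ▸ hz)]; simp [rAssoc]
      simp only [rAssoc]
      rw [hpsm x z, hpsm z x,
        Hpp j i l hj hi hll y hy x hx z hz, Hpm j i l hj hi hll y hy x hx z hz,
        Hpp j l i hj hll hi y hy z hz x hx, Hpm j l i hj hll hi y hy z hz x hx]
      linear_combination (norm := module)
        (((j : k)) / ((j : k) + (i : k) + (l : k))) • skew23 y x z
  have I4pol : ∀ x y z : A, lAssoc p s x z y + lAssoc p s z x y = 0 := by
    refine tri_red 𝒜 hsup (fun x y z => lAssoc p s x z y + lAssoc p s z x y) ?_ ?_ ?_ ?_ ?_ ?_ ?_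
    · intro x x' y z; simp only [lAssoc, map_add, LinearMap.add_apply]; abel
    · intro y z; simp [lAssoc]
    · intro x y y' z; simp only [lAssoc, map_add, LinearMap.add_apply]; abel
    · intro x z; simp [lAssoc]
    · intro x y z z'; simp only [lAssoc, map_add, LinearMap.add_apply]; abel
    · intro x y; simp [lAssoc]
    · intro i j l x hx y hy z hz
      rcases Nat.eq_zero_or_pos i with hi | hi
      · rw [hzero x (hi ▸ hx)]; simp [lAssoc]
      rcases Nat.eq_zero_or_pos j with hj | hj
      · rw [hzero y (hj ▸ hy)]; simp [lAssoc]
      rcases Nat.eq_zero_or_pos l with hll | hll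
      · rw [hzero z (hll ▸ hz)]; simp [lAssoc]
      simp only [lAssoc]
      rw [hpsm x z, hpsm z x,
        Hsm i l j hi hll hj x hx z hz y hy, Hss i l j hi hll hj x hx z hz y hy,
        Hsm l i j hll hi hj z hz x hx y hy, Hss l i j hll hi hj z hz x hx y hy]
      linear_combination (norm := module)
        (((j : k)) / ((i : k) + (l : k) + (j : k))) • skew12 x z y
  have I3 : ∀ x y : A, rAssoc p s y x x = 0 := by
    intro x y
    have h := I3pol x y x
    have h2 : (2 : k) • rAssoc p s y x x = 0 := by
      rw [two_smul]; exact h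
    rcases smul_eq_zero.mp h2 with h3 | h3
    · norm_num at h3
    · exact h3
  have I4 : ∀ x y : A, lAssoc p s x x y = 0 := by
    intro x y
    have h := I4pol x y x
    have h2 : (2 : k) • lAssoc p s x x y = 0 := by
      rw [two_smul]; exact h
    rcases smul_eq_zero.mp h2 with h3 | h3
    · norm_num at h3
    · exact h3
  exact ⟨⟨I1, I2, I3, I4⟩, hpsm⟩
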